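/- Let K ⊆ ℝ^n be a nonempty closed convex set and f a polynomial of degree d ≥ 1 such that OP(K,f) is regular (Sol(K∞, f_d) is bounded). Then the solution map is locally bounded at f: there exists ε > 0 such that the union O_ε = ⋃_{g ∈ B(ε)} Sol(K, f+g) is bounded, where B(ε) is the open ball of radius ε centered at 0 in the space P_d of polynomials of degree at most d. -/

import Mathlib

open Filter Topology MvPolynomial Bornology
open scoped RealInnerProductSpace Pointwise

noncomputable section

/-- `ℝ^n` as Euclidean space. -/
abbrev En (n : ℕ) := EuclideanSpace ℝ (Fin n)

/-- Evaluation of a multivariate polynomial at a point of `ℝ^n`. -/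
def evalP {n : ℕ} (f : MvPolynomial (Fin n) ℝ) (x : En n) : ℝ :=
  MvPolynomial.eval (fun i => x i) f

/-- `Sol(C,g)`: the set of global minimizers of `g` on `C`. -/
def solSet {n : ℕ} (C : Set (En n)) (g : En n → ℝ) : Set (En n) :=
  {x ∈ C | ∀ y ∈ C, g x ≤ g y}

/-- `K∞`: the asymptotic cone of `K`. -/
def asympCone {n : ℕ} (K : Set (En n)) : Set (En n) :=
  {v | ∃ (t : ℕ → ℝ) (x : ℕ → En n), (∀ k, x k ∈ K) ∧
    Tendsto t atTop atTop ∧ Tendsto (fun k => (t k)⁻¹ • x k) atTop (𝓝 v)}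

/-- The gradient `∇f` of a polynomial, via its partial derivatives. -/
def polyGrad {n : ℕ} (f : MvPolynomial (Fin n) ℝ) (x : En n) : En n :=
  WithLp.toLp 2 (fun i => MvPolynomial.eval (fun j => x j) (MvPolynomial.pderiv i f))

/-- The `ℓ2`-norm of the coefficient vector of a polynomial. -/
def l2Norm {n : ℕ} (p : MvPolynomial (Fin n) ℝ) : ℝ :=
  Real.sqrt (∑ m ∈ p.support, (MvPolynomial.coeff m p) ^ 2)

/-- `S` is generic (residual) in `X`: it contains a countable intersection of sets, each of
which is open and dense in `X` (with respect to the `ℓ2` coefficient metric). -/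
def IsGenericIn {n : ℕ} (X S : Set (MvPolynomial (Fin n) ℝ)) : Prop :=
  ∃ D : ℕ → Set (MvPolynomial (Fin n) ℝ),
    (∀ k, D k ⊆ X ∧
      (∀ g ∈ D k, ∃ ε > 0, ∀ g' ∈ X, l2Norm (g' - g) < ε → g' ∈ D k) ∧
      (∀ g ∈ X, ∀ ε > 0, ∃ g' ∈ D k, l2Norm (g' - g) < ε)) ∧
    X ∩ (⋂ k, D k) ⊆ S

lemma continuous_evalP {n : ℕ} (f : MvPolynomial (Fin n) ℝ) : Continuous (evalP f) := by
  unfold evalP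
  exact (MvPolynomial.continuous_eval f).comp (continuous_pi fun i => by fun_prop)

lemma coord_abs_le_norm {n : ℕ} (x : En n) (i : Fin n) : |x i| ≤ ‖x‖ := by
  rw [EuclideanSpace.norm_eq, ← Real.sqrt_sq_eq_abs]
  apply Real.sqrt_le_sqrt
  have := Finset.single_le_sum (f := fun j => ‖x j‖ ^ 2)
    (fun j _ => sq_nonneg _) (Finset.mem_univ i)
  simpa [Real.norm_eq_abs, sq_abs] using this

lemma l2Norm_nonneg {n : ℕ} (p : MvPolynomial (Fin n) ℝ) : 0 ≤ l2Norm p := Real.sqrt_nonneg _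

lemma abs_coeff_le_l2Norm {n : ℕ} (p : MvPolynomial (Fin n) ℝ) (m : Fin n →₀ ℕ) :
    |coeff m p| ≤ l2Norm p := by
  by_cases h : m ∈ p.support
  · rw [← Real.sqrt_sq_eq_abs]
    exact Real.sqrt_le_sqrt (Finset.single_le_sum (f := fun m' => coeff m' p ^ 2)
      (fun _ _ => sq_nonneg _) h)
  · simp [MvPolynomial.notMem_support_iff.mp h, l2Norm_nonneg p]

lemma evalP_smul_homog {n m : ℕ} {p : MvPolynomial (Fin n) ℝ} (hp : p.IsHomogeneous m)
    (c : ℝ) (x : En n) : evalP p (c • x) = c ^ m * evalP p x := by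
  unfold evalP
  have hsm : (fun i => (c • x) i) = fun i => c * x i := by
    funext i; simp
  rw [hsm, eval_eq', eval_eq', Finset.mul_sum]
  apply Finset.sum_congr rfl
  intro dd hdd
  have hdeg : dd.degree = m := by
    by_contra hne
    exact (MvPolynomial.mem_support_iff.mp hdd) (hp.coeff_eq_zero hne)
  have hsum : ∑ i : Fin n, dd i = m := by
    rw [← hdeg]
    exact (Finset.sum_subset (Finset.subset_univ _)
      (fun i _ hi => Finsupp.notMem_support_iff.mp hi)).symm
  have : ∏ i : Fin n, (c * x i) ^ dd i = c ^ m * ∏ i : Fin n, x i ^ dd i := by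
    rw [← hsum]
    simp_rw [mul_pow]
    rw [Finset.prod_mul_distrib, Finset.prod_pow_eq_pow_sum]
  rw [this]; ring

lemma sum_hc {n d : ℕ} (f : MvPolynomial (Fin n) ℝ) (h : f.totalDegree ≤ d) :
    ∑ j ∈ Finset.range (d + 1), homogeneousComponent j f = f := by
  conv_rhs => rw [← sum_homogeneousComponent f]
  refine (Finset.sum_subset (Finset.range_subset_range.mpr (by omega)) ?_).symm
  intro j _ hj
  simp only [Finset.mem_range, not_lt] at hj
  show homogeneousComponent j f = 0
  exact homogeneousComponent_eq_zero j f (by omega)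

lemma card_support_le {n d : ℕ} (p : MvPolynomial (Fin n) ℝ) (h : p.totalDegree ≤ d) :
    p.support.card ≤ (d + 1) ^ n := by
  have key : ∀ m ∈ p.support, ∀ i, m i ≤ d := by
    intro m hm i
    by_cases hi : i ∈ m.support
    · calc m i ≤ ∑ j ∈ m.support, m j :=
            Finset.single_le_sum (fun _ _ => Nat.zero_le _) hi
        _ ≤ p.totalDegree := le_totalDegree hm
        _ ≤ d := h
    · simp [Finsupp.notMem_support_iff.mp hi]
  have hcard := Finset.card_le_card_of_injOn
    (f := fun m : Fin n →₀ ℕ => fun i => (⟨m i % (d+1), Nat.mod_lt _ (by omega)⟩ : Fin (d+1)))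
    (fun m _ => Finset.mem_univ _)
    (by
      intro m1 h1 m2 h2 heq
      ext i
      have := congrFun heq i
      have h1' := key m1 h1 i
      have h2' := key m2 h2 i
      have : m1 i % (d+1) = m2 i % (d+1) := congrArg Fin.val this
      rwa [Nat.mod_eq_of_lt (by omega), Nat.mod_eq_of_lt (by omega)] at this)
  simpa using hcard

lemma abs_evalP_le {n d : ℕ} (p : MvPolynomial (Fin n) ℝ) (h : p.totalDegree ≤ d) (x : En n) :
    |evalP p x| ≤ ((d + 1) ^ n : ℝ) * l2Norm p * max 1 ‖x‖ ^ d := by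
  have hmax1 : (1 : ℝ) ≤ max 1 ‖x‖ := le_max_left _ _
  have hmono : ∀ m ∈ p.support, |coeff m p * ∏ i ∈ m.support, x i ^ m i|
      ≤ l2Norm p * max 1 ‖x‖ ^ d := by
    intro m hm
    rw [abs_mul]
    have h1 : |∏ i ∈ m.support, x i ^ m i| ≤ max 1 ‖x‖ ^ d := by
      rw [Finset.abs_prod]
      calc ∏ i ∈ m.support, |x i ^ m i| ≤ ∏ i ∈ m.support, max 1 ‖x‖ ^ m i := by
            apply Finset.prod_le_prod (fun _ _ => abs_nonneg _)
            intro i _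
            rw [abs_pow]
            exact pow_le_pow_left₀ (abs_nonneg _)
              ((coord_abs_le_norm x i).trans (le_max_right _ _)) _
        _ = max 1 ‖x‖ ^ (∑ i ∈ m.support, m i) := by rw [Finset.prod_pow_eq_pow_sum]
        _ ≤ max 1 ‖x‖ ^ d := pow_le_pow_right₀ hmax1 ((le_totalDegree hm).trans h)
    exact mul_le_mul (abs_coeff_le_l2Norm p m) h1 (abs_nonneg _)
      (l2Norm_nonneg p)
  calc |evalP p x| = |∑ m ∈ p.support, coeff m p * ∏ i ∈ m.support, x i ^ m i| := by
        rw [evalP, eval_eq]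
    _ ≤ ∑ m ∈ p.support, |coeff m p * ∏ i ∈ m.support, x i ^ m i| :=
        Finset.abs_sum_le_sum_abs _ _
    _ ≤ ∑ _m ∈ p.support, l2Norm p * max 1 ‖x‖ ^ d := Finset.sum_le_sum hmono
    _ = (p.support.card : ℝ) * (l2Norm p * max 1 ‖x‖ ^ d) := by
        rw [Finset.sum_const, nsmul_eq_mul]
    _ ≤ ((d + 1) ^ n : ℝ) * (l2Norm p * max 1 ‖x‖ ^ d) := by
        apply mul_le_mul_of_nonneg_right
        · exact_mod_cast Nat.cast_le.mpr (card_support_le p h)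
        · exact mul_nonneg (l2Norm_nonneg p) (by positivity)
    _ = ((d + 1) ^ n : ℝ) * l2Norm p * max 1 ‖x‖ ^ d := by ring

lemma zero_mem_asympCone {n : ℕ} {K : Set (En n)} (hK : K.Nonempty) : (0 : En n) ∈ asympCone K := by
  obtain ⟨x0, hx0⟩ := hK
  refine ⟨fun k => (k : ℝ) + 1, fun _ => x0, fun _ => hx0, ?_, ?_⟩
  · exact tendsto_atTop_add_const_right _ 1 tendsto_natCast_atTop_atTop
  · have h0 : Tendsto (fun k : ℕ => (k : ℝ) + 1) atTop atTop :=
      tendsto_atTop_add_const_right atTop 1 tendsto_natCast_atTop_atTop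
    have h1 : Tendsto (fun k : ℕ => ((k : ℝ) + 1)⁻¹) atTop (𝓝 (0 : ℝ)) :=
      tendsto_inv_atTop_zero.comp h0
    have h2 : Tendsto (fun k : ℕ => ((k : ℝ) + 1)⁻¹ • x0) atTop (𝓝 ((0:ℝ) • x0)) :=
      h1.smul_const x0
    simpa using h2

lemma smul_mem_asympCone {n : ℕ} {K : Set (En n)} (hK : K.Nonempty) {v : En n}
    (hv : v ∈ asympCone K) {c : ℝ} (hc : 0 ≤ c) : c • v ∈ asympCone K := by
  rcases eq_or_lt_of_le hc with hc0 | hc0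
  · rw [← hc0, zero_smul]; exact zero_mem_asympCone hK
  obtain ⟨t, x, hxK, ht, hlim⟩ := hv
  refine ⟨fun k => t k / c, x, hxK, ?_, ?_⟩
  · exact ht.atTop_div_const hc0
  · have : (fun k => (t k / c)⁻¹ • x k) = fun k => c • ((t k)⁻¹ • x k) := by
      funext k
      rw [div_eq_mul_inv, mul_inv, inv_inv, mul_comm, mul_smul]
    rw [this]
    exact (hlim.const_smul c)

lemma recession {n : ℕ} {K : Set (En n)} (hKcl : IsClosed K) (hKcv : Convex ℝ K)
    {w : En n} (hw : w ∈ asympCone K) {y : En n} (hy : y ∈ K) {s : ℝ} (hs : 0 ≤ s) :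
    y + s • w ∈ K := by
  obtain ⟨t, x, hxK, ht, hlim⟩ := hw
  have hev : ∀ᶠ k in atTop, max s 1 ≤ t k := ht.eventually_ge_atTop _
  -- z k = (1 - s / t k) • y + (s / t k) • x k ∈ K eventually
  have hmem : ∀ᶠ k in atTop, (1 - s / t k) • y + (s / t k) • x k ∈ K := by
    filter_upwards [hev] with k hk
    have htk : 0 < t k := lt_of_lt_of_le (by positivity) hk
    have hst : s / t k ≤ 1 := by
      rw [div_le_one htk]; exact le_trans (le_max_left s 1) hk
    have hst0 : 0 ≤ s / t k := div_nonneg hs htk.le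
    exact hKcv hy (hxK k) (by linarith) hst0 (by ring)
  have hlim2 : Tendsto (fun k => (1 - s / t k) • y + (s / t k) • x k) atTop (𝓝 (y + s • w)) := by
    have h0 : Tendsto (fun k => s / t k) atTop (𝓝 (0:ℝ)) := by
      have := (tendsto_inv_atTop_zero.comp ht).const_mul s
      simpa [div_eq_mul_inv] using this
    have hy' : Tendsto (fun k => (1 - s / t k) • y) atTop (𝓝 y) := by
      have := ((tendsto_const_nhds (x := (1:ℝ))).sub h0).smul_const y
      simpa using this
    have hx' : Tendsto (fun k => (s / t k) • x k) atTop (𝓝 (s • w)) := by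
      have : (fun k => (s / t k) • x k) = fun k => s • ((t k)⁻¹ • x k) := by
        funext k; rw [div_eq_mul_inv, mul_smul]
      rw [this]
      exact hlim.const_smul s
    exact hy'.add hx'
  exact hKcl.mem_of_tendsto hlim2 hmem

lemma tendsto_evalP_div_pow {n d : ℕ} (f : MvPolynomial (Fin n) ℝ) (hf : f.totalDegree ≤ d)
    {t : ℕ → ℝ} (ht : Tendsto t atTop atTop) {z : ℕ → En n} {w : En n}
    (hz : Tendsto (fun k => (t k)⁻¹ • z k) atTop (𝓝 w)) :
    Tendsto (fun k => evalP f (z k) / t k ^ d) atTop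
      (𝓝 (evalP (homogeneousComponent d f) w)) := by
  have hev : ∀ᶠ k in atTop, (1 : ℝ) ≤ t k := ht.eventually_ge_atTop 1
  have hdecomp : ∀ x : En n, evalP f x = ∑ j ∈ Finset.range (d + 1),
      evalP (homogeneousComponent j f) x := by
    intro x
    conv_lhs => rw [← sum_hc f hf]
    unfold evalP
    exact map_sum (MvPolynomial.eval fun i => x i) _ _
  have key : ∀ᶠ k in atTop, evalP f (z k) / t k ^ d
      = ∑ j ∈ Finset.range (d + 1),
          evalP (homogeneousComponent j f) ((t k)⁻¹ • z k) * (t k ^ (d - j))⁻¹ := by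
    filter_upwards [hev] with k hk
    have htk : (0 : ℝ) < t k := lt_of_lt_of_le zero_lt_one hk
    rw [hdecomp, Finset.sum_div]
    apply Finset.sum_congr rfl
    intro j hj
    rw [Finset.mem_range] at hj
    have hzk : z k = t k • ((t k)⁻¹ • z k) := by
      rw [smul_smul, mul_inv_cancel₀ htk.ne', one_smul]
    have h1 : evalP (homogeneousComponent j f) (z k)
        = t k ^ j * evalP (homogeneousComponent j f) ((t k)⁻¹ • z k) := by
      conv_lhs => rw [hzk]
      exact evalP_smul_homog (homogeneousComponent_isHomogeneous j f) _ _
    have hdj : t k ^ d = t k ^ j * t k ^ (d - j) := by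
      rw [← pow_add]; congr 1; omega
    rw [h1, hdj, mul_comm (t k ^ j) (evalP (homogeneousComponent j f) ((t k)⁻¹ • z k)),
      mul_div_assoc]
    congr 1
    field_simp
  have hsum : (evalP (homogeneousComponent d f) w)
      = ∑ j ∈ Finset.range (d + 1),
          (if j = d then evalP (homogeneousComponent d f) w else 0) := by
    rw [Finset.sum_ite_eq' (Finset.range (d + 1)) d
      (fun _ => evalP (homogeneousComponent d f) w)]
    simp
  rw [hsum]
  apply Tendsto.congr' (Filter.EventuallyEq.symm key)
  apply tendsto_finset_sum
  intro j hj
  rw [Finset.mem_range] at hj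
  have hcont : Tendsto (fun k => evalP (homogeneousComponent j f) ((t k)⁻¹ • z k)) atTop
      (𝓝 (evalP (homogeneousComponent j f) w)) :=
    ((continuous_evalP _).tendsto w).comp hz
  rcases eq_or_ne j d with rfl | hjd
  · simpa using hcont
  · simp only [if_neg hjd]
    have hpow : Tendsto (fun k => (t k ^ (d - j))⁻¹) atTop (𝓝 (0 : ℝ)) :=
      tendsto_inv_atTop_zero.comp ((tendsto_pow_atTop (n := d - j) (by omega)).comp ht)
    have := hcont.mul hpow
    simpa using this

lemma gterm_tendsto_zero {n d : ℕ} {g : ℕ → MvPolynomial (Fin n) ℝ}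
    (hdeg : ∀ k, (g k).totalDegree ≤ d)
    (hsmall : ∀ k, l2Norm (g k) ≤ 1 / ((k : ℝ) + 1)) {t : ℕ → ℝ} {z : ℕ → En n} {B : ℝ}
    (hB : ∀ᶠ k in atTop, max 1 ‖z k‖ ≤ B * t k) (ht : Tendsto t atTop atTop) :
    Tendsto (fun k => evalP (g k) (z k) / t k ^ d) atTop (𝓝 0) := by
  have ha : Tendsto (fun k : ℕ => ((d + 1) ^ n : ℝ) * B ^ d * (1 / ((k : ℝ) + 1))) atTop (𝓝 0) := by
    have := tendsto_one_div_add_atTop_nhds_zero_nat.const_mul (((d + 1) ^ n : ℝ) * B ^ d)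
    simpa using this
  have hb : ∀ᶠ k in atTop, ‖evalP (g k) (z k) / t k ^ d‖
      ≤ ((d + 1) ^ n : ℝ) * B ^ d * (1 / ((k : ℝ) + 1)) := by
    filter_upwards [hB, ht.eventually_ge_atTop 1] with k hk h1
    have htk : (0 : ℝ) < t k := lt_of_lt_of_le one_pos h1
    have hB0 : 0 ≤ B := by
      have h2 : (1 : ℝ) ≤ B * t k := le_trans (le_max_left _ _) hk
      nlinarith
    rw [Real.norm_eq_abs, abs_div, abs_pow, abs_of_pos htk, div_le_iff₀ (by positivity)]
    calc |evalP (g k) (z k)|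
        ≤ ((d + 1) ^ n : ℝ) * l2Norm (g k) * max 1 ‖z k‖ ^ d := abs_evalP_le _ (hdeg k) _
      _ ≤ ((d + 1) ^ n : ℝ) * (1 / ((k : ℝ) + 1)) * (B * t k) ^ d := by
          apply mul_le_mul
          · exact mul_le_mul_of_nonneg_left (hsmall k) (by positivity)
          · exact pow_le_pow_left₀ (by positivity) hk d
          · positivity
          · positivity
      _ = ((d + 1) ^ n : ℝ) * B ^ d * (1 / ((k : ℝ) + 1)) * t k ^ d := by
          rw [mul_pow]; ring
  exact squeeze_zero_norm' hb ha

/-- If `K` is nonempty closed convex and `OP(K,f)` is regular, then the solution map is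
locally bounded at `f`: there is `ε > 0` such that the union of the sets `Sol(K, f+g)` over
all `g ∈ P_d` with `‖g‖ < ε` is bounded. -/
theorem stmt9 {n d : ℕ} (hd : 1 ≤ d) (K : Set (En n)) (hKne : K.Nonempty) (hKcl : IsClosed K)
    (hKcv : Convex ℝ K) (f : MvPolynomial (Fin n) ℝ) (hdeg : f.totalDegree = d)
    (hreg : IsBounded (solSet (asympCone K) (evalP (homogeneousComponent d f)))) :
    ∃ ε > 0, IsBounded
      (⋃ g ∈ {g : MvPolynomial (Fin n) ℝ | g.totalDegree ≤ d ∧ l2Norm g < ε},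
        solSet K (evalP (f + g))) := by
  by_contra hcon
  push_neg at hcon
  -- extract sequences
  have hseq : ∀ k : ℕ, ∃ g : MvPolynomial (Fin n) ℝ, g.totalDegree ≤ d ∧
      l2Norm g ≤ 1 / ((k : ℝ) + 1) ∧
      ∃ x, x ∈ solSet K (evalP (f + g)) ∧ (k : ℝ) < ‖x‖ := by
    intro k
    have hb := hcon (1 / ((k : ℝ) + 1)) (by positivity)
    rw [isBounded_iff_forall_norm_le] at hb
    push_neg at hb
    obtain ⟨x, hx, hxk⟩ := hb k
    rw [Set.mem_iUnion₂] at hx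
    obtain ⟨g, hg, hxg⟩ := hx
    exact ⟨g, hg.1, hg.2.le, x, hxg, hxk⟩
  choose g hgdeg hgnorm x hxsol hxnorm using hseq
  -- the normalized sequence lives on the unit sphere
  have hxpos : ∀ k, (0 : ℝ) < ‖x k‖ := fun k =>
    lt_of_le_of_lt (by positivity) (hxnorm k)
  have husph : ∀ k, (‖x k‖)⁻¹ • x k ∈ Metric.sphere (0 : En n) 1 := by
    intro k
    rw [mem_sphere_zero_iff_norm, norm_smul, norm_inv, norm_norm,
      inv_mul_cancel₀ (hxpos k).ne']
  obtain ⟨v, hvcl, φ, hφ, hφlim⟩ :=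
    tendsto_subseq_of_bounded Metric.isBounded_sphere husph
  have hvnorm : ‖v‖ = 1 := by
    rw [Metric.isClosed_sphere.closure_eq] at hvcl
    rwa [mem_sphere_zero_iff_norm] at hvcl
  set t : ℕ → ℝ := fun k => ‖x (φ k)‖ with htdef
  have ht : Tendsto t atTop atTop := by
    apply tendsto_atTop_mono (f := fun k : ℕ => (k : ℝ))
    · intro k
      calc (k : ℝ) ≤ (φ k : ℝ) := by exact_mod_cast hφ.le_apply
        _ ≤ ‖x (φ k)‖ := (hxnorm (φ k)).le
    · exact tendsto_natCast_atTop_atTop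
  have hulim : Tendsto (fun k => (t k)⁻¹ • x (φ k)) atTop (𝓝 v) := by
    have : (fun k => (t k)⁻¹ • x (φ k)) = (fun k => (‖x k‖)⁻¹ • x k) ∘ φ := rfl
    rw [this]; exact hφlim
  have hvK : v ∈ asympCone K := ⟨t, fun k => x (φ k), fun k => (hxsol (φ k)).1, ht, hulim⟩
  -- small norms along the subsequence
  have hgsmall : ∀ k, l2Norm (g (φ k)) ≤ 1 / ((k : ℝ) + 1) := by
    intro k
    refine le_trans (hgnorm (φ k)) ?_
    apply one_div_le_one_div_of_le (by positivity)
    have : (k : ℝ) ≤ (φ k : ℝ) := by exact_mod_cast hφ.le_apply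
    linarith
  have hgdeg' : ∀ k, (g (φ k)).totalDegree ≤ d := fun k => hgdeg (φ k)
  set F : En n → ℝ := evalP (homogeneousComponent d f) with hFdef
  -- limit of the LHS
  have hLHS : Tendsto (fun k => evalP (f + g (φ k)) (x (φ k)) / t k ^ d) atTop (𝓝 (F v)) := by
    have heq : (fun k => evalP (f + g (φ k)) (x (φ k)) / t k ^ d)
        = fun k => evalP f (x (φ k)) / t k ^ d + evalP (g (φ k)) (x (φ k)) / t k ^ d := by
      funext k
      rw [evalP, map_add, add_div]; rfl
    rw [heq]
    have h1 : Tendsto (fun k => evalP f (x (φ k)) / t k ^ d) atTop (𝓝 (F v)) :=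
      tendsto_evalP_div_pow f hdeg.le ht hulim
    have h2 : Tendsto (fun k => evalP (g (φ k)) (x (φ k)) / t k ^ d) atTop (𝓝 0) := by
      refine gterm_tendsto_zero (B := 1) hgdeg' hgsmall ?_ ht
      filter_upwards [ht.eventually_ge_atTop 1] with k hk
      rw [one_mul]
      exact max_le hk le_rfl
    simpa using h1.add h2
  -- the minimality over points y0 + t k • w
  obtain ⟨y0, hy0⟩ := id hKne
  have hmin : ∀ w ∈ asympCone K, F v ≤ F w := by
    intro w hw
    set z : ℕ → En n := fun k => y0 + t k • w with hzdef
    have hzK : ∀ k, z k ∈ K := fun k =>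
      recession hKcl hKcv hw hy0 (norm_nonneg (x (φ k)))
    have hzlim : Tendsto (fun k => (t k)⁻¹ • z k) atTop (𝓝 w) := by
      have h1 : Tendsto (fun k => (t k)⁻¹) atTop (𝓝 (0 : ℝ)) :=
        tendsto_inv_atTop_zero.comp ht
      have h2 : Tendsto (fun k => (t k)⁻¹ • y0) atTop (𝓝 (0 : En n)) := by
        have := h1.smul_const y0
        simpa using this
      apply Tendsto.congr' _ (by simpa using h2.add (tendsto_const_nhds (x := w)))
      filter_upwards [ht.eventually_ge_atTop 1] with k hk
      have htk : t k ≠ 0 := (lt_of_lt_of_le one_pos hk).ne'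
      rw [hzdef]
      simp only [smul_add, smul_smul, inv_mul_cancel₀ htk, one_smul]
    have hRHS : Tendsto (fun k => evalP (f + g (φ k)) (z k) / t k ^ d) atTop (𝓝 (F w)) := by
      have heq : (fun k => evalP (f + g (φ k)) (z k) / t k ^ d)
          = fun k => evalP f (z k) / t k ^ d + evalP (g (φ k)) (z k) / t k ^ d := by
        funext k
        rw [evalP, map_add, add_div]; rfl
      rw [heq]
      have h1 : Tendsto (fun k => evalP f (z k) / t k ^ d) atTop (𝓝 (F w)) :=
        tendsto_evalP_div_pow f hdeg.le ht hzlim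
      have h2 : Tendsto (fun k => evalP (g (φ k)) (z k) / t k ^ d) atTop (𝓝 0) := by
        refine gterm_tendsto_zero (B := 1 + ‖y0‖ + ‖w‖) hgdeg' hgsmall ?_ ht
        filter_upwards [ht.eventually_ge_atTop 1] with k hk
        have htk : (0:ℝ) < t k := lt_of_lt_of_le one_pos hk
        have hzn : ‖z k‖ ≤ ‖y0‖ + t k * ‖w‖ := by
          rw [hzdef]
          refine le_trans (norm_add_le _ _) ?_
          rw [norm_smul, Real.norm_eq_abs, abs_of_pos htk]
        rw [max_le_iff]
        constructor
        · nlinarith [norm_nonneg y0, norm_nonneg w]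
        · nlinarith [norm_nonneg y0, norm_nonneg w]
      simpa using h1.add h2
    apply le_of_tendsto_of_tendsto' hLHS hRHS
    intro k
    have hle : evalP (f + g (φ k)) (x (φ k)) ≤ evalP (f + g (φ k)) (z k) :=
      (hxsol (φ k)).2 (z k) (hzK k)
    have htk : (0:ℝ) < t k := hxpos (φ k)
    exact (div_le_div_iff_of_pos_right (by positivity : (0:ℝ) < t k ^ d)).mpr hle
  -- F v = 0
  have hF0 : F (0 : En n) = 0 := by
    have := evalP_smul_homog (homogeneousComponent_isHomogeneous d f) (0 : ℝ) (0 : En n)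
    rw [smul_zero] at this
    rw [hFdef]
    rw [this, zero_pow (by omega), zero_mul]
  have hvle0 : F v ≤ 0 := by
    have := hmin 0 (zero_mem_asympCone hKne)
    rwa [hF0] at this
  have hvge0 : 0 ≤ F v := by
    have h2v := hmin ((2 : ℝ) • v) (smul_mem_asympCone hKne hvK (by norm_num))
    rw [hFdef] at h2v ⊢
    rw [evalP_smul_homog (homogeneousComponent_isHomogeneous d f) 2 v] at h2v
    have hp : (2:ℝ) ≤ 2 ^ d := by
      calc (2:ℝ) = 2 ^ 1 := (pow_one 2).symm
        _ ≤ 2 ^ d := pow_le_pow_right₀ one_le_two hd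
    nlinarith
  have hFv : F v = 0 := le_antisymm hvle0 hvge0
  -- contradiction with boundedness of the solution set
  obtain ⟨C, hC⟩ := isBounded_iff_forall_norm_le.mp hreg
  set c : ℝ := max C 0 + 1 with hcdef
  have hcpos : 0 < c := by positivity
  have hsol : c • v ∈ solSet (asympCone K) F := by
    constructor
    · exact smul_mem_asympCone hKne hvK hcpos.le
    · intro w hw
      have : F (c • v) = c ^ d * F v :=
        evalP_smul_homog (homogeneousComponent_isHomogeneous d f) c v
      rw [this, hFv, mul_zero]
      have := hmin w hw
      linarith
  have := hC (c • v) hsol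
  rw [norm_smul, hvnorm, mul_one, Real.norm_eq_abs, abs_of_pos hcpos] at this
  have hCc : C < c := by
    rw [hcdef]
    calc C ≤ max C 0 := le_max_left _ _
      _ < max C 0 + 1 := lt_add_one _
  linarith

end
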